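/- Fix ε ≠ 0 and define T_ε on the set {(x,t,u,v) : x > 0, u ≠ 0} ⊆ ℝ^4 by T_ε(x,t,u,v) = (e^{t+v/2}, t, 4ε e^{-(v+2t)}/(u x^2), 2(ε ln x - t)). Then for every integer N ≥ 1 the 2N-th iterate satisfies T_ε^{2N}(x,t,u,v) = (x^{ε^N}, t, x^{2(1-ε^N)} u, ε^N v + 2(ε^N - 1)t). Consequently, if ε = 1 then T_ε ∘ T_ε = id (a cyclic group of order 2), and if ε = -1 then T_ε^4 = id (a cyclic group of order 4). -/

import Mathlib

open Real

/-- The transformation `x' = e^{t+v/2}, t' = t, u' = 4ε e^{-(v+2t)}/(ux²),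
`v' = 2(ε ln x - t)` acting on the variables `(x,t,u,v)` of the potential system
`v_x = xu, v_t = (x/u) u_x`. -/
noncomputable def Teps (ε : ℝ) : ℝ × ℝ × ℝ × ℝ → ℝ × ℝ × ℝ × ℝ :=
  fun p => (exp (p.2.1 + p.2.2.2 / 2), p.2.1,
    4 * ε * exp (-(p.2.2.2 + 2 * p.2.1)) / (p.2.2.1 * p.1 ^ 2),
    2 * (ε * log p.1 - p.2.1))

lemma Teps_sq (ε : ℝ) (hε : ε ≠ 0) (x t u v : ℝ) (hx : 0 < x) (hu : u ≠ 0) :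
    Teps ε (Teps ε (x, t, u, v))
      = (x ^ ε, t, x ^ (2 * (1 - ε)) * u, ε * v + 2 * (ε - 1) * t) := by
  have hx2 : (x : ℝ) ^ (2:ℕ) = exp (2 * log x) := by
    rw [← Real.exp_log hx, ← Real.exp_nat_mul]
    norm_num
  simp only [Teps, Prod.mk.injEq]
  refine ⟨?_, trivial, ?_, ?_⟩
  · rw [Real.rpow_def_of_pos hx, show t + 2 * (ε * log x - t) / 2 = log x * ε by ring]
  · rw [hx2, Real.rpow_def_of_pos hx,
      show exp (t + v / 2) ^ (2:ℕ) = exp (2 * t + v) by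
        rw [← Real.exp_nat_mul]; ring_nf]
    field_simp
    rw [← Real.exp_add, ← Real.exp_add, ← Real.exp_add]
    rw [Real.exp_eq_exp]
    ring
  · rw [Real.log_exp]; ring

lemma Teps_iter (ε : ℝ) (hε : ε ≠ 0) :
    ∀ N : ℕ, 1 ≤ N → ∀ x t u v : ℝ, 0 < x → u ≠ 0 →
      (Teps ε)^[2 * N] (x, t, u, v) =
        (x ^ (ε ^ N), t, x ^ (2 * (1 - ε ^ N)) * u, ε ^ N * v + 2 * (ε ^ N - 1) * t) := by
  intro N
  induction N with
  | zero => intro h; omega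
  | succ n ih =>
    intro _ x t u v hx hu
    rcases Nat.eq_zero_or_pos n with hn | hn
    · subst hn
      show (Teps ε)^[2] (x, t, u, v) = _
      rw [Function.iterate_succ_apply', Function.iterate_one, Teps_sq ε hε x t u v hx hu]
      norm_num
    · have h2 : 2 * (n + 1) = 2 + 2 * n := by ring
      rw [h2, Function.iterate_add_apply, ih hn x t u v hx hu]
      have hx' : 0 < x ^ (ε ^ n) := Real.rpow_pos_of_pos hx _
      have hu' : x ^ (2 * (1 - ε ^ n)) * u ≠ 0 :=
        mul_ne_zero (Real.rpow_pos_of_pos hx _).ne' hu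
      show Teps ε (Teps ε _) = _
      rw [Teps_sq ε hε _ _ _ _ hx' hu']
      refine Prod.ext ?_ (Prod.ext rfl (Prod.ext ?_ ?_))
      · show (x ^ (ε ^ n)) ^ ε = x ^ (ε ^ (n + 1))
        rw [← Real.rpow_mul hx.le, ← pow_succ]
      · show (x ^ (ε ^ n)) ^ (2 * (1 - ε)) * (x ^ (2 * (1 - ε ^ n)) * u)
            = x ^ (2 * (1 - ε ^ (n + 1))) * u
        rw [← Real.rpow_mul hx.le, ← mul_assoc, ← Real.rpow_add hx]
        ring_nf
      · show ε * (ε ^ n * v + 2 * (ε ^ n - 1) * t) + 2 * (ε - 1) * t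
            = ε ^ (n + 1) * v + 2 * (ε ^ (n + 1) - 1) * t
        ring

/-- for `ε ≠ 0`, the `2N`-th iterate of `T_ε` on
`{(x,t,u,v) : x > 0, u ≠ 0}` is
`T_ε^{2N}(x,t,u,v) = (x^{ε^N}, t, x^{2(1-ε^N)} u, ε^N v + 2(ε^N - 1)t)`.
Consequently `T_ε ∘ T_ε = id` if `ε = 1` (cyclic group of order 2), and
`T_ε^4 = id` if `ε = -1` (cyclic group of order 4). -/
theorem stmt14 (ε : ℝ) (hε : ε ≠ 0) :
    (∀ N : ℕ, 1 ≤ N → ∀ x t u v : ℝ, 0 < x → u ≠ 0 →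
      (Teps ε)^[2 * N] (x, t, u, v) =
        (x ^ (ε ^ N), t, x ^ (2 * (1 - ε ^ N)) * u, ε ^ N * v + 2 * (ε ^ N - 1) * t)) ∧
    (ε = 1 → ∀ x t u v : ℝ, 0 < x → u ≠ 0 →
      Teps ε (Teps ε (x, t, u, v)) = (x, t, u, v)) ∧
    (ε = -1 → ∀ x t u v : ℝ, 0 < x → u ≠ 0 →
      (Teps ε)^[4] (x, t, u, v) = (x, t, u, v)) := by
  refine ⟨Teps_iter ε hε, ?_, ?_⟩
  · intro h1 x t u v hx hu
    subst h1
    rw [Teps_sq 1 hε x t u v hx hu]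
    norm_num [Real.rpow_one]
  · intro h1 x t u v hx hu
    subst h1
    have := Teps_iter (-1) hε 2 (by norm_num) x t u v hx hu
    norm_num at this ⊢
    exact this
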